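/- Along any solution of the Chow–Yang Ricci flow ODE (ρ μ' = 4(μ−1), ρ' = −4(μ^{-1}+3)) with μ(0) < 1 and ρ(0) > 0, there is a finite extinction time T > 0 such that μ(t) → 0 and ρ(t) → 0 as t → T⁻. -/

import Mathlib

open Set Filter Metric
open scoped Classical Topology

private lemma inv_sub_inv_abs_le (a x y : ℝ) (ha : 0 < a) (hx : a ≤ x) (hy : a ≤ y) :
    |x⁻¹ - y⁻¹| ≤ |x - y| / (a * a) := by
  have hx0 : 0 < x := ha.trans_le hx
  have hy0 : 0 < y := ha.trans_le hy
  have h : x⁻¹ - y⁻¹ = (y - x) / (x * y) := by field_simp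
  rw [h, abs_div, abs_of_pos (mul_pos hx0 hy0), abs_sub_comm]
  gcongr <;> nlinarith [mul_le_mul hx hy ha.le hx0.le]

private lemma clamp_abs_le (a x y : ℝ) : |max (min x 1) a - max (min y 1) a| ≤ |x - y| := by
  refine (abs_max_sub_max_le_abs _ _ _).trans ?_
  refine (abs_min_sub_min_le_max _ _ _ _).trans ?_
  rw [sub_self, abs_zero]
  exact max_le le_rfl (abs_nonneg _)

set_option maxHeartbeats 1600000 in
/-- For a maximal positive solution of `ρ μ' = 4(μ−1)`, `ρ' = −4(μ⁻¹+3)` with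
`μ(0) < 1`: there is a finite extinction time `T > 0` with `μ(t) → 0` and
`ρ(t) → 0` as `t → T⁻`. -/
theorem chowYang_flow_extinction_below (D : Set ℝ) (hDopen : IsOpen D)
    (hDconn : D.OrdConnected) (h0D : (0 : ℝ) ∈ D) (ρ μ : ℝ → ℝ)
    (hρpos : ∀ t ∈ D, 0 < ρ t) (hμpos : ∀ t ∈ D, 0 < μ t)
    (hμ : ∀ t ∈ D, HasDerivAt μ (4 * (μ t - 1) / ρ t) t)
    (hρ : ∀ t ∈ D, HasDerivAt ρ (-4 * ((μ t)⁻¹ + 3)) t)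
    (hinit : μ 0 < 1)
    (hmax : ∀ (D' : Set ℝ) (ρ' μ' : ℝ → ℝ), IsOpen D' → D'.OrdConnected → D ⊆ D' →
      (∀ t ∈ D, ρ' t = ρ t ∧ μ' t = μ t) →
      (∀ t ∈ D', 0 < ρ' t ∧ 0 < μ' t ∧
        HasDerivAt μ' (4 * (μ' t - 1) / ρ' t) t ∧
        HasDerivAt ρ' (-4 * ((μ' t)⁻¹ + 3)) t) → D' = D) :
    ∃ T : ℝ, 0 < T ∧ D ∩ Set.Ici 0 = Set.Ico 0 T ∧
      Filter.Tendsto μ (nhdsWithin T (Set.Iio T)) (nhds 0) ∧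
      Filter.Tendsto ρ (nhdsWithin T (Set.Iio T)) (nhds 0) := by
  have hρ0 : 0 < ρ 0 := hρpos 0 h0D
  have hμ0 : 0 < μ 0 := hμpos 0 h0D
  have h1μ0 : 0 < 1 - μ 0 := by linarith
  -- ρ decays linearly, so the forward domain is bounded
  have hbound : ∀ t ∈ D, 0 ≤ t → ρ t + 12 * t ≤ ρ 0 := by
    intro t ht h0t
    rcases eq_or_lt_of_le h0t with h | h
    · rw [← h]; linarith
    have hsub : Icc (0:ℝ) t ⊆ D := hDconn.out h0D ht
    have hanti : StrictAntiOn (fun s => ρ s + 12 * s) (Icc 0 t) := by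
      apply strictAntiOn_of_deriv_neg (convex_Icc 0 t)
      · intro s hs
        have h12 : HasDerivAt (fun y : ℝ => 12 * y) 12 s := by
          simpa using (hasDerivAt_id s).const_mul (12:ℝ)
        exact ((hρ s (hsub hs)).add h12).continuousAt.continuousWithinAt
      · intro s hs
        rw [interior_Icc] at hs
        have hsD := hsub (Ioo_subset_Icc_self hs)
        have h12 : HasDerivAt (fun y : ℝ => 12 * y) 12 s := by
          simpa using (hasDerivAt_id s).const_mul (12:ℝ)
        rw [HasDerivAt.deriv (f := fun s => ρ s + 12 * s) ((hρ s hsD).add h12)]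
        have h1 := hμpos s hsD
        have h2 : 0 < (μ s)⁻¹ := inv_pos.2 h1
        linarith
    have h' : ρ t + 12 * t < ρ 0 + 12 * 0 :=
      hanti (left_mem_Icc.2 h0t) (right_mem_Icc.2 h0t) h
    linarith
  -- the extinction time
  have hA0 : (0:ℝ) ∈ D ∩ Ici 0 := ⟨h0D, mem_Ici.2 le_rfl⟩
  have hAbdd : BddAbove (D ∩ Ici 0) := by
    refine ⟨ρ 0 / 12, fun t ht => ?_⟩
    have h1 := hbound t ht.1 ht.2
    have h2 := hρpos t ht.1
    linarith
  set T := sSup (D ∩ Ici 0) with hTdef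
  have hTmemle : ∀ t ∈ D ∩ Ici 0, t ≤ T := fun t ht => le_csSup hAbdd ht
  have hTnotD : T ∉ D := by
    intro hTD
    have hT0 : (0:ℝ) ≤ T := hTmemle 0 hA0
    rcases Metric.isOpen_iff.1 hDopen T hTD with ⟨ε, hε, hball⟩
    have hmem : T + ε/2 ∈ D ∩ Ici 0 := by
      refine ⟨hball ?_, by simp; linarith⟩
      rw [mem_ball, Real.dist_eq]
      rw [show T + ε/2 - T = ε/2 by ring, abs_of_pos (by linarith)]
      linarith
    have := hTmemle _ hmem
    linarith
  have hTpos : 0 < T := by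
    rcases Metric.isOpen_iff.1 hDopen 0 h0D with ⟨ε, hε, hball⟩
    have hmem : ε/2 ∈ D ∩ Ici 0 := by
      refine ⟨hball ?_, by simp; linarith⟩
      rw [mem_ball, Real.dist_eq]
      rw [show ε/2 - 0 = ε/2 by ring, abs_of_pos (by linarith)]
      linarith
    have := hTmemle _ hmem
    linarith
  have hIco : D ∩ Ici 0 = Ico 0 T := by
    apply Subset.antisymm
    · rintro t ⟨htD, ht0⟩
      refine ⟨ht0, lt_of_le_of_ne (hTmemle t ⟨htD, ht0⟩) ?_⟩
      rintro rfl; exact hTnotD htD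
    · rintro t ⟨ht0, htT⟩
      obtain ⟨s, hsA, hts⟩ := exists_lt_of_lt_csSup ⟨0, hA0⟩ htT
      exact ⟨hDconn.out h0D hsA.1 ⟨ht0, hts.le⟩, ht0⟩
  have hsubD : Ico 0 T ⊆ D := by rw [← hIco]; exact inter_subset_left
  -- the conserved quantity
  have hGd : ∀ t ∈ D, HasDerivAt (fun s => ρ s * (1 - μ s)^4 / μ s) 0 t := by
    intro t ht
    have hμne : μ t ≠ 0 := ne_of_gt (hμpos t ht)
    have hρne : ρ t ≠ 0 := ne_of_gt (hρpos t ht)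
    have h1 := ((hasDerivAt_const t (1:ℝ)).sub (hμ t ht)).pow 4
    have h3 := ((hρ t ht).mul h1).div (hμ t ht) hμne
    refine h3.congr_deriv ?_
    simp only [Pi.sub_apply, Pi.pow_apply, Pi.mul_apply]
    field_simp
    ring
  have hGconst : ∀ t ∈ Ico 0 T,
      ρ t * (1 - μ t)^4 / μ t = ρ 0 * (1 - μ 0)^4 / μ 0 := by
    intro t ht
    have hIccD : Icc 0 t ⊆ D := hDconn.out h0D (hsubD ht)
    have := constant_of_has_deriv_right_zero
      (f := fun s => ρ s * (1 - μ s)^4 / μ s) (a := 0) (b := t)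
      (fun s hs => ((hGd s (hIccD hs)).continuousAt).continuousWithinAt)
      (fun s hs => (hGd s (hIccD (Ico_subset_Icc_self hs))).hasDerivWithinAt)
    exact this t (right_mem_Icc.2 ht.1)
  -- μ stays below 1
  have hμlt1 : ∀ t ∈ Ico 0 T, μ t < 1 := by
    intro t ht
    have hIccD : Icc 0 t ⊆ D := hDconn.out h0D (hsubD ht)
    have hne : ∀ s ∈ Icc 0 t, μ s ≠ 1 := by
      intro s hs heq
      have hsmem : s ∈ Ico 0 T := ⟨hs.1, lt_of_le_of_lt hs.2 ht.2⟩
      have h1 := hGconst s hsmem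
      rw [heq] at h1
      simp at h1
      have hpos : 0 < ρ 0 * (1 - μ 0)^4 / μ 0 := by positivity
      linarith
    by_contra h
    push_neg at h
    have hcont : ContinuousOn μ (Icc 0 t) :=
      fun s hs => ((hμ s (hIccD hs)).continuousAt).continuousWithinAt
    have him := intermediate_value_Icc ht.1 hcont
    have h1mem : (1:ℝ) ∈ Icc (μ 0) (μ t) := ⟨hinit.le, h⟩
    obtain ⟨s, hs, hμs⟩ := him h1mem
    exact hne s hs hμs
  -- μ is strictly decreasing on [0, T)
  have hμanti : StrictAntiOn μ (Ico 0 T) := by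
    apply strictAntiOn_of_deriv_neg (convex_Ico 0 T)
      (fun s hs => ((hμ s (hsubD hs)).continuousAt).continuousWithinAt)
    intro x hx
    rw [interior_Ico] at hx
    have hxm : x ∈ Ico 0 T := ⟨hx.1.le, hx.2⟩
    rw [(hμ x (hsubD hxm)).deriv]
    have h1 := hμlt1 x hxm
    have h2 := hρpos x (hsubD hxm)
    apply div_neg_of_neg_of_pos _ h2
    linarith
  have hμle0 : ∀ t ∈ Ico 0 T, μ t ≤ μ 0 := by
    intro t ht
    rcases eq_or_lt_of_le ht.1 with h | h
    · rw [← h]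
    · exact (hμanti (left_mem_Ico.2 hTpos) ht h).le
  -- the infimum of μ
  have hIooT : (Ioo (0:ℝ) T).Nonempty := ⟨T/2, by constructor <;> linarith⟩
  have hbddB : BddBelow (μ '' Ioo 0 T) := by
    refine ⟨0, ?_⟩
    rintro y ⟨s, hs, rfl⟩
    exact (hμpos s (hsubD (Ioo_subset_Ico_self hs))).le
  set m := sInf (μ '' Ioo 0 T) with hmdef
  have hμlim : Tendsto μ (𝓝[<] T) (𝓝 m) :=
    AntitoneOn.tendsto_nhdsWithin_Ioo_left hIooT
      (hμanti.antitoneOn.mono Ioo_subset_Ico_self) hbddB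
  have hm0 : 0 ≤ m := by
    apply le_csInf (hIooT.image μ)
    rintro y ⟨s, hs, rfl⟩
    exact (hμpos s (hsubD (Ioo_subset_Ico_self hs))).le
  have hmle : ∀ t ∈ Ioo 0 T, m ≤ μ t := fun t ht => csInf_le hbddB (mem_image_of_mem μ ht)
  have hmμ0 : m ≤ μ 0 := by
    have h1 := hmle (T/2) ⟨by linarith, by linarith⟩
    have h2 := hμle0 (T/2) ⟨by linarith, by linarith⟩
    linarith
  have hm1 : m < 1 := lt_of_le_of_lt hmμ0 hinit
  -- the formula for ρ
  have hCcpos : 0 < ρ 0 * (1 - μ 0)^4 / μ 0 := by positivity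
  set Cc := ρ 0 * (1 - μ 0)^4 / μ 0 with hCcdef
  have hρform : ∀ t ∈ Ico 0 T, ρ t = Cc * μ t / (1 - μ t)^4 := by
    intro t ht
    have h1 := hGconst t ht
    have hμt := hμpos t (hsubD ht)
    have h1m : 0 < 1 - μ t := by linarith [hμlt1 t ht]
    rw [div_eq_iff (ne_of_gt hμt)] at h1
    rw [eq_div_iff (by positivity : (1 - μ t)^4 ≠ 0)]
    linarith [h1]
  have hρlb : ∀ s ∈ Ioo 0 T, Cc * m ≤ ρ s := by
    intro s hs
    have hsI : s ∈ Ico 0 T := Ioo_subset_Ico_self hs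
    have h1 := hρform s hsI
    have hμs := hμpos s (hsubD hsI)
    have h1m : 0 < 1 - μ s := by linarith [hμlt1 s hsI]
    have h4 : 0 < (1 - μ s)^4 := by positivity
    have h41 : (1 - μ s)^4 ≤ 1 := pow_le_one₀ (by linarith) (by linarith)
    have hms := hmle s hs
    rw [h1, le_div_iff₀ h4]
    have e1 : Cc*m*(1 - μ s)^4 ≤ Cc*m :=
      mul_le_of_le_one_right (mul_nonneg hCcpos.le hm0) h41
    have e2 : Cc*m ≤ Cc*μ s := mul_le_mul_of_nonneg_left hms hCcpos.le
    linarith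
  have hρlim : Tendsto ρ (𝓝[<] T) (𝓝 (Cc * m / (1 - m)^4)) := by
    have h1m : (1:ℝ) - m ≠ 0 := ne_of_gt (by linarith)
    have htend : Tendsto (fun t => Cc * μ t / (1 - μ t)^4) (𝓝[<] T)
        (𝓝 (Cc * m / (1 - m)^4)) :=
      (tendsto_const_nhds.mul hμlim).div
        ((tendsto_const_nhds.sub hμlim).pow 4) (pow_ne_zero 4 h1m)
    apply htend.congr'
    filter_upwards [Ioo_mem_nhdsLT_of_mem (⟨hTpos, le_refl T⟩ : T ∈ Ioc 0 T)] with t ht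
    exact (hρform t (Ioo_subset_Ico_self ht)).symm
  -- main step : m = 0
  have hmzero : m = 0 := by
    by_contra hm
    have hmpos : 0 < m := lt_of_le_of_ne hm0 (Ne.symm hm)
    -- the clamped vector field
    set U : ℝ → ℝ := fun u => max (min u 1) (m/2) with hU
    set v : ℝ → ℝ × ℝ → ℝ × ℝ := fun _ p =>
      (-4 * ((U p.2)⁻¹ + 3), 4 * (U p.2 - 1) / max p.1 (Cc*m/2)) with hv
    have hrb : (0:ℝ) < Cc*m/2 := by positivity
    have hUlb : ∀ u, m/2 ≤ U u := fun u => le_max_right _ _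
    have hUub : ∀ u, U u ≤ 1 := fun u => max_le (min_le_right u 1) (by linarith)
    have hvEq : ∀ (t : ℝ) (p : ℝ × ℝ), m/2 ≤ p.2 → p.2 ≤ 1 → Cc*m/2 ≤ p.1 →
        v t p = (-4 * ((p.2)⁻¹ + 3), 4 * (p.2 - 1) / p.1) := by
      intro t p h1 h2 h3
      simp only [hv, hU]
      rw [min_eq_left h2, max_eq_left h1, max_eq_left h3]
    -- Lipschitz
    obtain ⟨K, hK⟩ : ∃ K : NNReal, ∀ t : ℝ, LipschitzWith K (v t) := by
      have hd2 : ∀ p q : ℝ×ℝ, |p.2 - q.2| ≤ dist p q := by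
        intro p q
        rw [Prod.dist_eq, Real.dist_eq, Real.dist_eq]
        exact le_max_right _ _
      have hd1 : ∀ p q : ℝ×ℝ, |p.1 - q.1| ≤ dist p q := by
        intro p q
        rw [Prod.dist_eq, Real.dist_eq, Real.dist_eq]
        exact le_max_left _ _
      have hUd : ∀ p q : ℝ×ℝ, |U p.2 - U q.2| ≤ |p.2 - q.2| := by
        intro p q
        simp only [hU]
        exact clamp_abs_le _ _ _
      have h1 : LipschitzWith (Real.toNNReal (4/((m/2)*(m/2))))
          (fun p : ℝ×ℝ => -4 * ((U p.2)⁻¹ + 3)) := by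
        apply LipschitzWith.of_dist_le'
        intro p q
        have hA : (0:ℝ) < (m/2)*(m/2) := by positivity
        have hi : |(U p.2)⁻¹ - (U q.2)⁻¹| ≤ |U p.2 - U q.2| / ((m/2)*(m/2)) :=
          inv_sub_inv_abs_le (m/2) _ _ (by linarith) (hUlb _) (hUlb _)
        have hi2 : |(U p.2)⁻¹ - (U q.2)⁻¹| ≤ dist p q / ((m/2)*(m/2)) := by
          refine hi.trans ?_
          gcongr
          exact (hUd p q).trans (hd2 p q)
        rw [Real.dist_eq]
        rw [show -4 * ((U p.2)⁻¹ + 3) - -4 * ((U q.2)⁻¹ + 3)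
          = (-4) * ((U p.2)⁻¹ - (U q.2)⁻¹) by ring, abs_mul]
        rw [show |(-4:ℝ)| = 4 by norm_num]
        calc 4 * |(U p.2)⁻¹ - (U q.2)⁻¹| ≤ 4 * (dist p q / ((m/2)*(m/2))) := by linarith
          _ = 4/((m/2)*(m/2)) * dist p q := by ring
      have h2 : LipschitzWith (Real.toNNReal (4/(Cc*m/2) + 4/((Cc*m/2)*(Cc*m/2))))
          (fun p : ℝ×ℝ => 4 * (U p.2 - 1) / max p.1 (Cc*m/2)) := by
        apply LipschitzWith.of_dist_le'
        intro p q
        have hMp : Cc*m/2 ≤ max p.1 (Cc*m/2) := le_max_right _ _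
        have hMq : Cc*m/2 ≤ max q.1 (Cc*m/2) := le_max_right _ _
        have hMp0 : max p.1 (Cc*m/2) ≠ 0 := ne_of_gt (lt_of_lt_of_le hrb hMp)
        have hMq0 : max q.1 (Cc*m/2) ≠ 0 := ne_of_gt (lt_of_lt_of_le hrb hMq)
        have key : 4 * (U p.2 - 1) / max p.1 (Cc*m/2) - 4 * (U q.2 - 1) / max q.1 (Cc*m/2)
            = 4 * (U p.2 - U q.2) * (max p.1 (Cc*m/2))⁻¹
              + (4 * (U q.2 - 1)) * ((max p.1 (Cc*m/2))⁻¹ - (max q.1 (Cc*m/2))⁻¹) := by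
          field_simp
          ring
        rw [Real.dist_eq, key]
        have t1 : |4 * (U p.2 - U q.2) * (max p.1 (Cc*m/2))⁻¹|
            ≤ 4/(Cc*m/2) * dist p q := by
          rw [abs_mul, abs_mul, show |(4:ℝ)| = 4 by norm_num]
          have hinv : |(max p.1 (Cc*m/2))⁻¹| ≤ (Cc*m/2)⁻¹ := by
            rw [abs_inv, abs_of_pos (lt_of_lt_of_le hrb hMp)]
            exact inv_anti₀ hrb hMp
          have hUq : |U p.2 - U q.2| ≤ dist p q := ((hUd p q).trans (hd2 p q))
          calc 4 * |U p.2 - U q.2| * |(max p.1 (Cc*m/2))⁻¹|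
              ≤ 4 * dist p q * (Cc*m/2)⁻¹ := by
                apply mul_le_mul _ hinv (abs_nonneg _) (by positivity)
                apply mul_le_mul_of_nonneg_left hUq (by norm_num)
            _ = 4/(Cc*m/2) * dist p q := by ring
        have t2 : |(4 * (U q.2 - 1)) * ((max p.1 (Cc*m/2))⁻¹ - (max q.1 (Cc*m/2))⁻¹)|
            ≤ 4/((Cc*m/2)*(Cc*m/2)) * dist p q := by
          rw [abs_mul]
          have hb1 : |4 * (U q.2 - 1)| ≤ 4 := by
            rw [abs_mul, show |(4:ℝ)| = 4 by norm_num]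
            have h1 := hUlb q.2
            have h2 := hUub q.2
            have : |U q.2 - 1| ≤ 1 := abs_le.mpr ⟨by linarith, by linarith⟩
            linarith
          have hb2 : |(max p.1 (Cc*m/2))⁻¹ - (max q.1 (Cc*m/2))⁻¹|
              ≤ dist p q / ((Cc*m/2)*(Cc*m/2)) := by
            refine (inv_sub_inv_abs_le (Cc*m/2) _ _ hrb hMp hMq).trans ?_
            gcongr
            exact (abs_max_sub_max_le_abs _ _ _).trans (hd1 p q)
          calc |4 * (U q.2 - 1)| * |(max p.1 (Cc*m/2))⁻¹ - (max q.1 (Cc*m/2))⁻¹|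
              ≤ 4 * (dist p q / ((Cc*m/2)*(Cc*m/2))) := by
                apply mul_le_mul hb1 hb2 (abs_nonneg _) (by norm_num)
            _ = 4/((Cc*m/2)*(Cc*m/2)) * dist p q := by ring
          
        calc |4 * (U p.2 - U q.2) * (max p.1 (Cc*m/2))⁻¹
              + (4 * (U q.2 - 1)) * ((max p.1 (Cc*m/2))⁻¹ - (max q.1 (Cc*m/2))⁻¹)|
            ≤ |4 * (U p.2 - U q.2) * (max p.1 (Cc*m/2))⁻¹|
              + |(4 * (U q.2 - 1)) * ((max p.1 (Cc*m/2))⁻¹ - (max q.1 (Cc*m/2))⁻¹)| :=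
              abs_add_le _ _
          _ ≤ 4/(Cc*m/2) * dist p q + 4/((Cc*m/2)*(Cc*m/2)) * dist p q := by linarith
          _ = (4/(Cc*m/2) + 4/((Cc*m/2)*(Cc*m/2))) * dist p q := by ring
      refine ⟨max (Real.toNNReal (4/((m/2)*(m/2))))
        (Real.toNNReal (4/(Cc*m/2) + 4/((Cc*m/2)*(Cc*m/2)))), fun t => ?_⟩
      simp only [hv]
      exact h1.prodMk h2
    -- norm bound
    have hCb : ∀ (t : ℝ) (x : ℝ × ℝ), ‖v t x‖ ≤ 4*(2/m + 3) + 4/(Cc*m/2) := by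
      intro t x
      have hterm : (0:ℝ) ≤ 4/(Cc*m/2) := by positivity
      have hterm2 : (0:ℝ) ≤ 4*(2/m + 3) := by positivity
      rw [Prod.norm_def]
      apply max_le
      · simp only [hv]
        rw [Real.norm_eq_abs]
        have hUpos : 0 < U x.2 := lt_of_lt_of_le (by linarith) (hUlb _)
        have h1 : (U x.2)⁻¹ ≤ 2/m := by
          rw [show (2:ℝ)/m = (m/2)⁻¹ by rw [inv_div]]
          exact inv_anti₀ (by linarith) (hUlb _)
        have h2 : 0 < (U x.2)⁻¹ := inv_pos.2 hUpos
        rw [show -4 * ((U x.2)⁻¹ + 3) = -(4 * ((U x.2)⁻¹ + 3)) by ring,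
          abs_neg, abs_of_pos (by linarith)]
        linarith
      · simp only [hv]
        rw [Real.norm_eq_abs, abs_div]
        have hMx : Cc*m/2 ≤ max x.1 (Cc*m/2) := le_max_right _ _
        have hMxpos : 0 < max x.1 (Cc*m/2) := lt_of_lt_of_le hrb hMx
        have hnum : |4 * (U x.2 - 1)| ≤ 4 := by
          rw [abs_mul, show |(4:ℝ)| = 4 by norm_num]
          have h1 := hUlb x.2
          have h2 := hUub x.2
          have : |U x.2 - 1| ≤ 1 := abs_le.mpr ⟨by linarith, by linarith⟩
          linarith
        have : |4 * (U x.2 - 1)| / |max x.1 (Cc*m/2)| ≤ 4 / (Cc*m/2) := by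
          rw [abs_of_pos hMxpos]
          exact div_le_div₀ (by norm_num) hnum hrb hMx
        linarith
    -- pick t0 close to T
    set t0 := max (T - 1/4) (T/2) with ht0def
    have ht0T : t0 < T := max_lt (by linarith) (by linarith)
    have ht0pos : 0 < t0 := lt_of_lt_of_le (by linarith) (le_max_right _ _)
    have hTt0 : T - t0 ≤ 1/4 := by
      have := le_max_left (T - 1/4) (T/2)
      linarith
    have hTlt : T < t0 + 1 := by linarith
    have ht0Ico : t0 ∈ Ico 0 T := ⟨ht0pos.le, ht0T⟩
    have ht0D : t0 ∈ D := hsubD ht0Ico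
    -- Picard–Lindelöf
    have hCbpos : (0:ℝ) ≤ 4*(2/m + 3) + 4/(Cc*m/2) := by positivity
    set Cb : NNReal := ⟨4*(2/m + 3) + 4/(Cc*m/2), hCbpos⟩ with hCbdef
    have hPL : IsPicardLindelof v (tmin := t0-1) (tmax := t0+1)
        ⟨t0, by constructor <;> linarith⟩ (ρ t0, μ t0) Cb 0 Cb K :=
      { lipschitzOnWith := fun t _ => (hK t).lipschitzOnWith
        continuousOn := fun x _ => continuousOn_const
        norm_le := fun t _ x _ => hCb t x
        mul_max_le := by
          simp only [hCbdef, NNReal.coe_mk, NNReal.coe_zero, sub_zero]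
          rw [show t0 + 1 - t0 = (1:ℝ) by ring, show t0 - (t0 - 1) = (1:ℝ) by ring,
            max_self, mul_one] }
    obtain ⟨σ, hσ0', hσderiv⟩ := hPL.exists_eq_forall_mem_Icc_hasDerivWithinAt₀
    have hσ0 : σ t0 = (ρ t0, μ t0) := hσ0'
    have hσd : ∀ t ∈ Ioo (t0-1) (t0+1), HasDerivAt σ (v t (σ t)) t :=
      fun t ht => (hσderiv t (Ioo_subset_Icc_self ht)).hasDerivAt (Icc_mem_nhds ht.1 ht.2)
    -- σ agrees with (ρ, μ) on [t0, T)
    have hagree : ∀ t ∈ Ico t0 T, (ρ t, μ t) = σ t := by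
      intro t ht
      rcases eq_or_lt_of_le ht.1 with h | h
      · rw [← h, hσ0]
      · have huniq := ODE_solution_unique_of_mem_Icc_right
          (v := v) (s := fun _ => (univ : Set (ℝ×ℝ))) (K := K)
          (fun t _ => (hK t).lipschitzOnWith)
          (f := fun s => (ρ s, μ s)) (g := σ) (a := t0) (b := t)
          ?_ ?_ (fun s _ => mem_univ _) ?_ ?_ (fun s _ => mem_univ _) hσ0.symm
        · exact (huniq ⟨h.le, le_refl t⟩)
        · intro s hs
          have hsmem : s ∈ Ico 0 T := ⟨le_trans ht0pos.le hs.1, lt_of_le_of_lt hs.2 ht.2⟩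
          exact (((hρ s (hsubD hsmem)).continuousAt).prodMk
            ((hμ s (hsubD hsmem)).continuousAt)).continuousWithinAt
        · intro s hs
          have hsmem : s ∈ Ico 0 T := ⟨le_trans ht0pos.le hs.1, lt_trans hs.2 ht.2⟩
          have hsIoo : s ∈ Ioo 0 T := ⟨lt_of_lt_of_le ht0pos hs.1, hsmem.2⟩
          have hd := (hρ s (hsubD hsmem)).prodMk (hμ s (hsubD hsmem))
          have hval : v s (ρ s, μ s) = (-4 * ((μ s)⁻¹ + 3), 4 * (μ s - 1) / ρ s) :=
            hvEq s (ρ s, μ s)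
              (show m/2 ≤ μ s by have := hmle s hsIoo; linarith)
              (show μ s ≤ 1 by linarith [hμlt1 s hsmem])
              (show Cc*m/2 ≤ ρ s by have := hρlb s hsIoo; linarith)
          refine HasDerivAt.hasDerivWithinAt ?_
          show HasDerivAt (fun s => (ρ s, μ s)) (v s (ρ s, μ s)) s
          rw [hval]
          exact hd
        · intro s hs
          exact ((hσd s ⟨by linarith [hs.1], by
            linarith [hs.2, ht.2]⟩).continuousAt).continuousWithinAt
        · intro s hs
          exact (hσd s ⟨by linarith [hs.1], by linarith [hs.2, ht.2]⟩).hasDerivWithinAt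
    -- the value of σ at T
    have hTmem : T ∈ Ioo (t0-1) (t0+1) := ⟨by linarith, by linarith⟩
    have hσcont : ContinuousAt σ T := (hσd T hTmem).continuousAt
    have hσT : σ T = (Cc*m/(1-m)^4, m) := by
      have h1 : Tendsto σ (𝓝[<] T) (𝓝 (σ T)) := hσcont.continuousWithinAt
      have h2 : Tendsto (fun t => (ρ t, μ t)) (𝓝[<] T) (𝓝 (Cc*m/(1-m)^4, m)) :=
        hρlim.prodMk_nhds hμlim
      have h3 : Tendsto σ (𝓝[<] T) (𝓝 (Cc*m/(1-m)^4, m)) := by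
        apply h2.congr'
        filter_upwards [Ioo_mem_nhdsLT_of_mem (⟨ht0T, le_refl T⟩ : T ∈ Ioc t0 T)] with s hs
        exact hagree s ⟨hs.1.le, hs.2⟩
      exact tendsto_nhds_unique h1 h3
    have hrlim : Cc*m ≤ Cc*m/(1-m)^4 := by
      have h1m' : 0 < 1 - m := by linarith
      have h4 : 0 < (1-m)^4 := by positivity
      have h41 : (1-m)^4 ≤ 1 := pow_le_one₀ (by linarith) (by linarith)
      rw [le_div_iff₀ h4]
      have := mul_le_of_le_one_right (mul_nonneg hCcpos.le hm0) h41
      linarith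
    -- the continuity window
    set ε₀ := min (min (m/4) (Cc*m/4)) ((1 - μ 0)/2) with hε₀def
    have hCm4 : 0 < Cc*m/4 := by
      have := mul_pos hCcpos hmpos
      linarith
    have hε₀pos : 0 < ε₀ := by
      rw [hε₀def]
      exact lt_min (lt_min (by linarith) hCm4) (by linarith)
    have hε₀1 : ε₀ ≤ m/4 := le_trans (min_le_left _ _) (min_le_left _ _)
    have hε₀2 : ε₀ ≤ Cc*m/4 := le_trans (min_le_left _ _) (min_le_right _ _)
    have hε₀3 : ε₀ ≤ (1 - μ 0)/2 := min_le_right _ _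
    obtain ⟨η, hηpos, hη⟩ := Metric.continuousAt_iff.1 hσcont ε₀ hε₀pos
    set η' := min (η/2) (min ((T - t0)/2) ((t0 + 1 - T)/2)) with hη'def
    have hη'pos : 0 < η' := lt_min (by linarith) (lt_min (by linarith) (by linarith))
    have hη'1 : η' ≤ η/2 := min_le_left _ _
    have hη'2 : η' ≤ (T - t0)/2 := le_trans (min_le_right _ _) (min_le_left _ _)
    have hη'3 : η' ≤ (t0 + 1 - T)/2 := le_trans (min_le_right _ _) (min_le_right _ _)
    have hσcomp : ∀ s ∈ Ioo (T - η') (T + η'),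
        Cc*m/2 < (σ s).1 ∧ m/2 < (σ s).2 ∧ (σ s).2 < 1 := by
      intro s hs
      have hd : dist (σ s) (σ T) < ε₀ := by
        apply hη
        rw [Real.dist_eq, abs_lt]
        constructor
        · linarith [hs.1]
        · linarith [hs.2]
      rw [hσT, Prod.dist_eq] at hd
      have hd1 : dist (σ s).1 (Cc*m/(1-m)^4) < ε₀ := lt_of_le_of_lt (le_max_left _ _) hd
      have hd2 : dist (σ s).2 m < ε₀ := lt_of_le_of_lt (le_max_right _ _) hd
      rw [Real.dist_eq, abs_lt] at hd1 hd2
      refine ⟨by linarith [hd1.1, hrlim], by linarith [hd2.1], by linarith [hd2.2]⟩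
    -- the extension
    set W := Ioo (T - η') (T + η') with hWdef
    have hWsub : W ⊆ Ioo (t0-1) (t0+1) := by
      intro s hs
      constructor
      · linarith [hs.1]
      · linarith [hs.2]
    set ρn : ℝ → ℝ := fun s => if s ∈ D then ρ s else (σ s).1 with hρndef
    set μn : ℝ → ℝ := fun s => if s ∈ D then μ s else (σ s).2 with hμndef
    have hWD : ∀ s ∈ W, s ∈ D → s ∈ Ico t0 T := by
      intro s hs hsD
      have hs0 : (0:ℝ) ≤ s := by linarith [hs.1]
      have hsIco : s ∈ Ico 0 T := by rw [← hIco]; exact ⟨hsD, hs0⟩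
      exact ⟨by linarith [hs.1], hsIco.2⟩
    have hρnW : ∀ s ∈ W, ρn s = (σ s).1 := by
      intro s hs
      by_cases hsD : s ∈ D
      · have h1 := hagree s (hWD s hs hsD)
        rw [Prod.ext_iff] at h1
        simp only [hρndef, if_pos hsD]
        exact h1.1
      · simp only [hρndef, if_neg hsD]
    have hμnW : ∀ s ∈ W, μn s = (σ s).2 := by
      intro s hs
      by_cases hsD : s ∈ D
      · have h1 := hagree s (hWD s hs hsD)
        rw [Prod.ext_iff] at h1
        simp only [hμndef, if_pos hsD]
        exact h1.2
      · simp only [hμndef, if_neg hsD]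
    have hagreeD : ∀ t ∈ D, ρn t = ρ t ∧ μn t = μ t := by
      intro t ht
      constructor
      · simp only [hρndef, if_pos ht]
      · simp only [hμndef, if_pos ht]
    have hmidD : T - η'/2 ∈ D := hsubD ⟨by linarith, by linarith⟩
    have hconn : (D ∪ W).OrdConnected := by
      constructor
      rintro x hx y hy z hz
      by_cases hzD : z ∈ D
      · exact Or.inl hzD
      rcases le_or_gt z (T - η'/2) with hzle | hzgt
      · rcases hx with hxD | hxW
        · exact Or.inl (hDconn.out hxD hmidD ⟨hz.1, hzle⟩)
        · exact Or.inr ⟨lt_of_lt_of_le hxW.1 hz.1, by linarith⟩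
      · rcases hy with hyD | hyW
        · have hy0 : (0:ℝ) ≤ y := by
            have : (0:ℝ) ≤ z := by linarith
            linarith [hz.2]
          have hyIco : y ∈ Ico 0 T := by rw [← hIco]; exact ⟨hyD, hy0⟩
          exact Or.inr ⟨by linarith, by linarith [hz.2, hyIco.2]⟩
        · exact Or.inr ⟨by linarith, lt_of_le_of_lt hz.2 hyW.2⟩
    have hall : ∀ t ∈ D ∪ W, 0 < ρn t ∧ 0 < μn t ∧
        HasDerivAt μn (4 * (μn t - 1) / ρn t) t ∧
        HasDerivAt ρn (-4 * ((μn t)⁻¹ + 3)) t := by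
      intro t ht
      by_cases htD : t ∈ D
      · have heρ : ρn =ᶠ[𝓝 t] ρ := by
          filter_upwards [hDopen.mem_nhds htD] with s hs
          simp only [hρndef, if_pos hs]
        have heμ : μn =ᶠ[𝓝 t] μ := by
          filter_upwards [hDopen.mem_nhds htD] with s hs
          simp only [hμndef, if_pos hs]
        obtain ⟨he1, he2⟩ := hagreeD t htD
        refine ⟨?_, ?_, ?_, ?_⟩
        · rw [he1]; exact hρpos t htD
        · rw [he2]; exact hμpos t htD
        · rw [he1, he2]
          exact (hμ t htD).congr_of_eventuallyEq heμ
        · rw [he2]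
          exact (hρ t htD).congr_of_eventuallyEq heρ
      · have htW : t ∈ W := ht.resolve_left htD
        have hc := hσcomp t htW
        have heρ : ρn =ᶠ[𝓝 t] (fun s => (σ s).1) := by
          filter_upwards [isOpen_Ioo.mem_nhds htW] with s hs
          exact hρnW s hs
        have heμ : μn =ᶠ[𝓝 t] (fun s => (σ s).2) := by
          filter_upwards [isOpen_Ioo.mem_nhds htW] with s hs
          exact hμnW s hs
        have hσdt := hσd t (hWsub htW)
        have hval : v t (σ t) = (-4 * (((σ t).2)⁻¹ + 3), 4 * ((σ t).2 - 1) / (σ t).1) :=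
          hvEq t (σ t) (by linarith [hc.2.1]) (by linarith [hc.2.2]) (by linarith [hc.1])
        have hd1 : HasDerivAt (fun s => (σ s).1) (-4 * (((σ t).2)⁻¹ + 3)) t := by
          have := (ContinuousLinearMap.fst ℝ ℝ ℝ).hasFDerivAt.comp_hasDerivAt t hσdt
          rw [hval] at this
          exact this
        have hd2 : HasDerivAt (fun s => (σ s).2) (4 * ((σ t).2 - 1) / (σ t).1) t := by
          have := (ContinuousLinearMap.snd ℝ ℝ ℝ).hasFDerivAt.comp_hasDerivAt t hσdt
          rw [hval] at this
          exact this
        refine ⟨?_, ?_, ?_, ?_⟩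
        · rw [hρnW t htW]; linarith [hc.1]
        · rw [hμnW t htW]; linarith [hc.2.1]
        · rw [hρnW t htW, hμnW t htW]
          exact hd2.congr_of_eventuallyEq heμ
        · rw [hμnW t htW]
          exact hd1.congr_of_eventuallyEq heρ
    have hDeq := hmax (D ∪ W) ρn μn (hDopen.union isOpen_Ioo) hconn
      subset_union_left hagreeD hall
    have hTD' : T ∈ D ∪ W := Or.inr ⟨by linarith, by linarith⟩
    rw [hDeq] at hTD'
    exact hTnotD hTD'
  refine ⟨T, hTpos, hIco, ?_, ?_⟩
  · rw [hmzero] at hμlim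
    exact hμlim
  · rw [hmzero] at hρlim
    simpa using hρlim
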